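/- arXiv:2009.10206 — 4 statements merged into one kernel-verified Lean document; each statement's English description precedes it below -/
import Mathlib

section
/- Let α > −1 and n ∈ ℕ, and suppose L_{n+1}^{(α+1)} and L_n^{(α)} have no common zeros. Let 0 < z_1 < z_2 < ⋯ < z_{n+1} denote the zeros of L_{n+1}^{(α+1)} and set z_0 = 0. Then each of the n+1 open intervals (z_{i−1}, z_i), i = 1, …, n+1, contains either the point n+1 or exactly one (simple) zero of L_n^{(α)}, but not both. -/
open Polynomial

/-- The generalized Laguerre polynomial `L_n^{(α)}(x) =
∑_{k=0}^{n} (−1)^k [∏_{j=k+1}^{n}(α+j)] / ((n−k)!·k!) · x^k`. -/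
noncomputable def laguerre (α : ℝ) (n : ℕ) : Polynomial ℝ :=
  ∑ k ∈ Finset.range (n + 1),
    Polynomial.C ((-1 : ℝ) ^ k * (∏ j ∈ Finset.Icc (k + 1) n, (α + (j : ℝ))) /
      ((n - k).factorial * k.factorial)) * Polynomial.X ^ k

section LaguerreAux

open Finset

lemma coeff_laguerre (α : ℝ) (n m : ℕ) :
    (laguerre α n).coeff m = if m ≤ n then
      ((-1 : ℝ) ^ m * (∏ j ∈ Finset.Icc (m + 1) n, (α + (j : ℝ))) /
      ((n - m).factorial * m.factorial)) else 0 := by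
  rw [laguerre, finset_sum_coeff]
  simp only [coeff_C_mul, coeff_X_pow, mul_ite, mul_one, mul_zero]
  rw [Finset.sum_ite_eq (Finset.range (n+1)) m]
  simp [Nat.lt_succ_iff]

lemma prod_shift (α : ℝ) (a b : ℕ) :
    ∏ j ∈ Finset.Icc a b, (α + 1 + (j : ℝ)) = ∏ j ∈ Finset.Icc (a+1) (b+1), (α + (j : ℝ)) := by
  rw [← Finset.map_add_right_Icc a b 1, Finset.prod_map]
  apply Finset.prod_congr rfl
  intro x _
  simp [addRightEmbedding]
  ring

lemma prod_Icc_bot (f : ℕ → ℝ) (a b : ℕ) (h : a ≤ b) :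
    ∏ j ∈ Finset.Icc a b, f j = f a * ∏ j ∈ Finset.Icc (a+1) b, f j := by
  rw [← Finset.Ico_add_one_right_eq_Icc, ← Finset.Ico_add_one_right_eq_Icc,
    Finset.prod_eq_prod_Ico_succ_bot (by omega)]

lemma coeff_X_mul_deriv (p : Polynomial ℝ) (l : ℕ) :
    (X * derivative p).coeff l = p.coeff l * l := by
  cases l with
  | zero => simp [mul_coeff_zero]
  | succ k => rw [coeff_X_mul, coeff_derivative]; push_cast; ring

set_option maxHeartbeats 1000000 in
lemma laguerre_identity (α : ℝ) (n : ℕ) :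
    C ((n:ℝ)+1) * (X + C (α+1)) * laguerre (α+1) (n+1)
      - X * (X - C ((n:ℝ)+1)) * derivative (laguerre (α+1) (n+1))
    = C ((α+(n:ℝ)+1)*(α+(n:ℝ)+2)) * laguerre α n := by
  set p := laguerre (α+1) (n+1) with hp
  have expand : C ((n:ℝ)+1) * (X + C (α+1)) * p
      - X * (X - C ((n:ℝ)+1)) * derivative p
    = C ((n:ℝ)+1) * (X * p) + C (((n:ℝ)+1)*(α+1)) * p
      - X * (X * derivative p) + C ((n:ℝ)+1) * (X * derivative p) := by
    simp only [C_mul]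
    ring
  rw [expand]
  ext m
  simp only [coeff_add, coeff_sub, coeff_C_mul]
  cases m with
  | zero =>
    simp only [mul_coeff_zero, coeff_X_zero, zero_mul, mul_zero, add_zero, sub_zero]
    rw [hp, coeff_laguerre, coeff_laguerre, if_pos (Nat.zero_le _), if_pos (Nat.zero_le _)]
    have h1 : ∏ j ∈ Finset.Icc (0+1) (n+1), (α+1+(j:ℝ))
        = ∏ j ∈ Finset.Icc 2 (n+2), (α + (j:ℝ)) := prod_shift α 1 (n+1)
    have h2 : ∏ j ∈ Finset.Icc 1 (n+2), (α + (j:ℝ))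
        = (α + 1) * ∏ j ∈ Finset.Icc 2 (n+2), (α + (j:ℝ)) := by
      have := prod_Icc_bot (fun j => α + (j:ℝ)) 1 (n+2) (by omega)
      simpa using this
    have h3 : ∏ j ∈ Finset.Icc 1 (n+2), (α + (j:ℝ))
        = (∏ j ∈ Finset.Icc 1 n, (α + (j:ℝ))) * (α + ((n:ℝ)+1)) * (α + ((n:ℝ)+2)) := by
      rw [show n+2 = (n+1)+1 by omega, Finset.prod_Icc_succ_top (by omega),
        Finset.prod_Icc_succ_top (by omega)]
      push_cast; ring
    have h4 : (α + 1) * ∏ j ∈ Finset.Icc 2 (n+2), (α + (j:ℝ))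
        = (∏ j ∈ Finset.Icc 1 n, (α + (j:ℝ))) * (α + ((n:ℝ)+1)) * (α + ((n:ℝ)+2)) := by
      rw [← h2, h3]
    rw [h1, Nat.sub_zero, Nat.sub_zero, Nat.factorial_succ]
    have hf : ((n.factorial : ℝ)) ≠ 0 := Nat.cast_ne_zero.mpr n.factorial_ne_zero
    push_cast
    field_simp
    linear_combination h4
  | succ l =>
    rw [coeff_X_mul, coeff_X_mul, coeff_X_mul_deriv, coeff_X_mul, coeff_derivative]
    rcases le_or_gt (l+1) n with hln | hln
    · -- middle case
      obtain ⟨d, rfl⟩ := Nat.exists_eq_add_of_le hln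
      rw [hp, coeff_laguerre, coeff_laguerre, coeff_laguerre,
        if_pos (show l ≤ l+1+d+1 by omega), if_pos (show l+1 ≤ l+1+d+1 by omega),
        if_pos (show l+1 ≤ l+1+d by omega),
        show l+1+d+1 - l = d+2 by omega, show l+1+d+1 - (l+1) = d+1 by omega,
        show l+1+d - (l+1) = d by omega]
      have E1 : ∏ j ∈ Finset.Icc (l+1) (l+1+d+1), (α+1+(j:ℝ))
          = (α + ((l:ℝ)+2)) * ∏ j ∈ Finset.Icc (l+3) (l+d+3), (α+(j:ℝ)) := by
        rw [prod_shift α (l+1) (l+1+d+1), show l+1+1 = l+2 by omega,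
          show l+1+d+1+1 = l+d+3 by omega,
          prod_Icc_bot (fun j => α + (j:ℝ)) (l+2) (l+d+3) (by omega)]
        push_cast
        ring_nf
      have E2 : ∏ j ∈ Finset.Icc (l+1+1) (l+1+d+1), (α+1+(j:ℝ))
          = ∏ j ∈ Finset.Icc (l+3) (l+d+3), (α+(j:ℝ)) := by
        rw [prod_shift α (l+1+1) (l+1+d+1), show l+1+1+1 = l+3 by omega,
          show l+1+d+1+1 = l+d+3 by omega]
      have h3 : (α + ((l:ℝ)+2)) * ∏ j ∈ Finset.Icc (l+3) (l+d+3), (α+(j:ℝ))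
          = (∏ j ∈ Finset.Icc (l+1+1) (l+1+d), (α+(j:ℝ)))
            * ((α + ((l:ℝ)+(d:ℝ)+2)) * (α + ((l:ℝ)+(d:ℝ)+3))) := by
        rw [← E1, prod_shift α (l+1) (l+1+d+1), show l+1+1 = l+2 by omega,
          show l+1+d+1+1 = l+d+3 by omega,
          show l+d+3 = (l+d+2)+1 by omega, Finset.prod_Icc_succ_top (by omega),
          show l+d+2 = (l+d+1)+1 by omega, Finset.prod_Icc_succ_top (by omega),
          show l+d+1 = l+1+d by omega, show l+2 = l+1+1 by omega]
        push_cast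
        ring
      rw [E1, E2]
      push_cast
      set D := ((d+2).factorial : ℝ) * ((l+1).factorial : ℝ) with hDdef
      have hD : D ≠ 0 := by
        rw [hDdef]
        positivity
      have hfd2 : ((d+2).factorial : ℝ) = ((d:ℝ)+2)*(((d:ℝ)+1)*(d.factorial:ℝ)) := by
        rw [show (d+2).factorial = (d+2)*((d+1)*d.factorial) by
          rw [Nat.factorial_succ, Nat.factorial_succ]]
        push_cast; ring
      have hfd1 : ((d+1).factorial : ℝ) = ((d:ℝ)+1)*(d.factorial:ℝ) := by
        rw [Nat.factorial_succ]; push_cast; ring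
      have hfl1 : ((l+1).factorial : ℝ) = ((l:ℝ)+1)*(l.factorial:ℝ) := by
        rw [Nat.factorial_succ]; push_cast; ring
      have hd : ((d.factorial:ℝ)) ≠ 0 := Nat.cast_ne_zero.mpr d.factorial_ne_zero
      have hl : ((l.factorial:ℝ)) ≠ 0 := Nat.cast_ne_zero.mpr l.factorial_ne_zero
      set Pp := ∏ j ∈ Finset.Icc (l+3) (l+d+3), (α+(j:ℝ)) with hPp
      set Q := ∏ j ∈ Finset.Icc (l+1+1) (l+1+d), (α+(j:ℝ)) with hQ
      have F1 : ((-1:ℝ)^l * ((α + ((l:ℝ) + 2)) * Pp)) / (((d+2).factorial:ℝ) * (l.factorial:ℝ))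
          = (((l:ℝ)+1) * ((-1:ℝ)^l * ((α + ((l:ℝ) + 2)) * Pp))) / D := by
        rw [div_eq_div_iff (by positivity) hD, hDdef, hfd2, hfl1]; ring
      have F2 : ((-1:ℝ)^(l+1) * Pp) / (((d+1).factorial:ℝ) * ((l+1).factorial:ℝ))
          = (((d:ℝ)+2) * ((-1:ℝ)^(l+1) * Pp)) / D := by
        rw [div_eq_div_iff (by positivity) hD, hDdef, hfd2, hfd1]; ring
      have F3 : ((-1:ℝ)^(l+1) * Q) / ((d.factorial:ℝ) * ((l+1).factorial:ℝ))
          = ((((d:ℝ)+1)*((d:ℝ)+2)) * ((-1:ℝ)^(l+1) * Q)) / D := by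
        rw [div_eq_div_iff (by positivity) hD, hDdef, hfd2]; ring
      rw [F1, F2, F3]
      simp only [div_mul_eq_mul_div, ← mul_div_assoc]
      simp only [← sub_div, ← add_div]
      rw [div_eq_div_iff hD hD]
      linear_combination ((-1:ℝ)^(l+1) * ((d:ℝ)+1) * ((d:ℝ)+2) * D) * h3
    · -- l ≥ n
      rcases (show l = n ∨ l = n+1 ∨ n+2 ≤ l by omega) with rfl | h | h
      · rw [hp, coeff_laguerre, coeff_laguerre, coeff_laguerre,
          if_pos (show l ≤ l+1 by omega), if_pos (le_refl (l+1)),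
          if_neg (show ¬ (l+1 ≤ l) by omega),
          show l+1-l = 1 by omega, Nat.sub_self, Finset.Icc_self, Finset.prod_singleton,
          show Finset.Icc (l+1+1) (l+1) = ∅ from Finset.Icc_eq_empty (by omega),
          Finset.prod_empty, Nat.factorial_one, Nat.factorial_zero,
          show (l+1).factorial = (l+1)*l.factorial from Nat.factorial_succ l]
        have hl : ((l.factorial:ℝ)) ≠ 0 := Nat.cast_ne_zero.mpr l.factorial_ne_zero
        push_cast
        field_simp
        ring
      · subst h
        rw [hp, coeff_laguerre, coeff_laguerre, coeff_laguerre,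
          if_pos (le_refl (n+1)), if_neg (show ¬ (n+1+1 ≤ n+1) by omega),
          if_neg (show ¬ (n+1+1 ≤ n) by omega)]
        push_cast
        ring
      · rw [hp, coeff_laguerre, coeff_laguerre, coeff_laguerre,
          if_neg (show ¬ (l ≤ n+1) by omega), if_neg (show ¬ (l+1 ≤ n+1) by omega),
          if_neg (show ¬ (l+1 ≤ n) by omega)]
        ring

lemma coeff_laguerre_self (α : ℝ) (n : ℕ) :
    (laguerre α n).coeff n = (-1 : ℝ) ^ n / n.factorial := by
  rw [coeff_laguerre]
  simp

lemma natDegree_laguerre (α : ℝ) (n : ℕ) : (laguerre α n).natDegree = n := by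
  refine le_antisymm ?_ (le_natDegree_of_ne_zero ?_)
  · rw [laguerre]
    refine (natDegree_sum_le _ _).trans ?_
    rw [Finset.fold_max_le]
    refine ⟨Nat.zero_le _, fun k hk => ?_⟩
    exact (natDegree_C_mul_le _ _).trans <| by
      simpa using Nat.lt_succ_iff.mp (Finset.mem_range.mp hk)
  · rw [coeff_laguerre_self]
    positivity

lemma laguerre_ne_zero (α : ℝ) (n : ℕ) : laguerre α n ≠ 0 := by
  intro h
  have h2 := coeff_laguerre_self α n
  rw [h, coeff_zero] at h2
  have h3 : ((-1:ℝ) ^ n / n.factorial) ≠ 0 := by positivity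
  exact h3 h2.symm

lemma leadingCoeff_laguerre (α : ℝ) (n : ℕ) :
    (laguerre α n).leadingCoeff = (-1 : ℝ) ^ n / n.factorial := by
  rw [leadingCoeff, natDegree_laguerre, coeff_laguerre_self]

lemma eval_zero_laguerre (α : ℝ) (n : ℕ) (hα : -1 < α) :
    0 < (laguerre α n).eval 0 := by
  have h0 : (laguerre α n).eval 0 = (laguerre α n).coeff 0 := by
    simp [eval_eq_sum_range, Finset.sum_range_succ']   -- maybe: coeff_zero_eq_eval_zero
  rw [h0, coeff_laguerre]
  simp only [Nat.zero_le, if_true]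
  apply div_pos
  · simp only [pow_zero, one_mul]
    apply Finset.prod_pos
    intro j hj
    have : (1:ℕ) ≤ j := (Finset.mem_Icc.mp hj).1
    have : (1:ℝ) ≤ j := by exact_mod_cast this
    linarith
  · positivity

end LaguerreAux

theorem laguerre_interlacing_deg_succ_param_one
    (α : ℝ) (hα : -1 < α) (n : ℕ)
    (hnc : ∀ t : ℝ, ¬((laguerre (α + 1) (n + 1)).eval t = 0 ∧ (laguerre α n).eval t = 0))
    (z : ℕ → ℝ) (hz0 : z 0 = 0)
    (hzpos : ∀ i ∈ Finset.Icc 1 (n + 1), 0 < z i)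
    (hzmono : ∀ i ∈ Finset.Icc 1 (n + 1), ∀ j ∈ Finset.Icc 1 (n + 1), i < j → z i < z j)
    (hzroots : ∀ t : ℝ, (laguerre (α + 1) (n + 1)).eval t = 0 ↔ ∃ i ∈ Finset.Icc 1 (n + 1), z i = t) :
    ∀ i ∈ Finset.Icc 1 (n + 1),
      Xor' (((n : ℝ) + 1) ∈ Set.Ioo (z (i - 1)) (z i))
        (∃! t : ℝ, t ∈ Set.Ioo (z (i - 1)) (z i) ∧ (laguerre α n).eval t = 0) := by
  set p := laguerre (α+1) (n+1) with hpdef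
  set q := laguerre α n with hqdef
  set S := Finset.Icc 1 (n+1) with hSdef
  set K := (α+(n:ℝ)+1)*(α+(n:ℝ)+2) with hKdef
  have hKpos : 0 < K := by
    have h1 : (0:ℝ) < α + (n:ℝ) + 1 := by
      have : (0:ℕ) ≤ n := Nat.zero_le n
      have : (0:ℝ) ≤ (n:ℝ) := Nat.cast_nonneg n
      linarith
    have h2 : (0:ℝ) < α + (n:ℝ) + 2 := by linarith
    exact mul_pos h1 h2
  -- evaluated identity
  have key : ∀ t : ℝ, ((n:ℝ)+1)*((t+(α+1))*(p.eval t))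
      - t*((t-((n:ℝ)+1))*((derivative p).eval t))
      = (α+(n:ℝ)+1)*((α+(n:ℝ)+2)*(q.eval t)) := by
    intro t
    have := congrArg (eval t) (laguerre_identity α n)
    simpa [eval_mul, eval_add, eval_sub, eval_C, eval_X, mul_assoc] using this
  -- roots of p
  have hzne : ∀ i ∈ S, ∀ j ∈ S, i ≠ j → z i ≠ z j := by
    intro i hi j hj hij
    rcases Nat.lt_or_ge i j with h | h
    · exact ne_of_lt (hzmono i hi j hj h)
    · exact (ne_of_lt (hzmono j hj i hi (by omega))).symm
  set m : Multiset ℝ := S.val.map z with hmdef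
  have hmnodup : m.Nodup := by
    rw [hmdef]
    exact Multiset.Nodup.map_on (fun a ha b hb h => by
      by_contra hab
      exact hzne a ha b hb hab h) S.nodup
  have hmcard : Multiset.card m = n+1 := by
    rw [hmdef, Multiset.card_map]
    show Multiset.card S.val = n+1
    rw [← Finset.card_def, hSdef, Nat.card_Icc]
    omega
  have hmem_root : ∀ a ∈ m, p.eval a = 0 := by
    intro a ha
    rw [hmdef, Multiset.mem_map] at ha
    obtain ⟨i, hi, rfl⟩ := ha
    exact (hzroots (z i)).mpr ⟨i, hi, rfl⟩
  have hpne : p ≠ 0 := laguerre_ne_zero _ _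
  have hroots : p.roots = m := by
    have hle : m ≤ p.roots := by
      rw [Multiset.le_iff_count]
      intro a
      by_cases ham : a ∈ m
      · rw [Multiset.count_eq_one_of_mem hmnodup ham]
        rw [Nat.one_le_iff_ne_zero, ← Nat.pos_iff_ne_zero, Multiset.count_pos]
        exact (mem_roots').mpr ⟨hpne, hmem_root a ham⟩
      · rw [Multiset.count_eq_zero_of_notMem ham]
        omega
    refine (Multiset.eq_of_le_of_card_le hle ?_).symm
    rw [hmcard]
    calc Multiset.card p.roots ≤ p.natDegree := p.card_roots'
    _ = n+1 := natDegree_laguerre _ _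
  -- factorization of p
  set c : ℝ := (-1:ℝ)^(n+1) / (n+1).factorial with hcdef
  have hc : p.leadingCoeff = c := leadingCoeff_laguerre _ _
  have hfact : p = C c * (m.map fun a => X - C a).prod := by
    rw [← hc, ← hroots]
    exact (C_leadingCoeff_mul_prod_multiset_X_sub_C
      (by rw [hroots, hmcard, natDegree_laguerre])).symm
  -- derivative at roots
  have hm_split : ∀ i ∈ S, m = z i ::ₘ ((S.erase i).val.map z) := by
    intro i hi
    rw [hmdef]
    conv_lhs => rw [show S.val = i ::ₘ (S.erase i).val from
      (Multiset.cons_erase (by exact hi)).symm]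
    rfl
  have hderiv : ∀ i ∈ S, (derivative p).eval (z i)
      = c * ∏ j ∈ S.erase i, (z i - z j) := by
    intro i hi
    have hzi : z i ∈ m := by rw [hm_split i hi]; exact Multiset.mem_cons_self _ _
    rw [hfact, derivative_C_mul, eval_C_mul,
      eval_multiset_prod_X_sub_C_derivative hzi]
    congr 1
    have : m.erase (z i) = (S.erase i).val.map z := by
      rw [hm_split i hi, Multiset.erase_cons_head]
    rw [this, Finset.prod_eq_multiset_prod, Multiset.map_map]
    rfl
  -- q at roots of p
  have hqz : ∀ i ∈ S, K * q.eval (z i) = z i * ((((n:ℝ)+1) - z i) * ((derivative p).eval (z i))) := by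
    intro i hi
    have h := key (z i)
    have hp0 : p.eval (z i) = 0 := hmem_root (z i) (by
      rw [hmdef, Multiset.mem_map]; exact ⟨i, hi, rfl⟩)
    rw [hp0] at h
    linear_combination (q.eval (z i)) * hKdef - h
  have hKne : K ≠ 0 := ne_of_gt hKpos
  have hzneq : ∀ i ∈ S, z i ≠ (n:ℝ)+1 := by
    intro i hi heq
    have h := hqz i hi
    have h2 : K * q.eval (z i) = 0 := by rw [h, heq]; ring
    have hq0 : q.eval (z i) = 0 := by
      rcases mul_eq_zero.mp h2 with h3 | h3
      · exact absurd h3 hKne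
      · exact h3
    exact hnc (z i) ⟨hmem_root (z i) (by rw [hmdef, Multiset.mem_map]; exact ⟨i, hi, rfl⟩), hq0⟩
  -- sign of the product
  have hprodsign : ∀ i ∈ S, 0 < (-1:ℝ)^(n+1-i) * ∏ j ∈ S.erase i, (z i - z j) := by
    intro i hi
    have hiIcc := Finset.mem_Icc.mp (hSdef ▸ hi)
    have hsplit : S.erase i = (Finset.Icc 1 (i-1)) ∪ (Finset.Icc (i+1) (n+1)) := by
      ext a
      simp only [Finset.mem_erase, hSdef, Finset.mem_Icc, Finset.mem_union]
      omega
    have hdisj2 : Disjoint (Finset.Icc 1 (i-1)) (Finset.Icc (i+1) (n+1)) := by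
      rw [Finset.disjoint_left]
      intro a ha hb
      simp only [Finset.mem_Icc] at ha hb
      omega
    have hA : 0 < ∏ j ∈ Finset.Icc 1 (i-1), (z i - z j) := by
      apply Finset.prod_pos
      intro j hj
      have hj2 := Finset.mem_Icc.mp hj
      have : z j < z i := hzmono j (by rw [hSdef]; exact Finset.mem_Icc.mpr (by omega)) i hi (by omega)
      linarith
    have hC : 0 < ∏ j ∈ Finset.Icc (i+1) (n+1), (z j - z i) := by
      apply Finset.prod_pos
      intro j hj
      have hj2 := Finset.mem_Icc.mp hj
      have : z i < z j := hzmono i hi j (by rw [hSdef]; exact Finset.mem_Icc.mpr (by omega)) (by omega)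
      linarith
    have hB : ∏ j ∈ Finset.Icc (i+1) (n+1), (z i - z j)
        = (-1:ℝ)^(n+1-i) * ∏ j ∈ Finset.Icc (i+1) (n+1), (z j - z i) := by
      rw [show n+1-i = (Finset.Icc (i+1) (n+1)).card from by rw [Nat.card_Icc]; omega,
        ← Finset.prod_const, ← Finset.prod_mul_distrib]
      apply Finset.prod_congr rfl
      intro j _
      ring
    have hsq : ((-1:ℝ)^(n+1-i)) * ((-1:ℝ)^(n+1-i)) = 1 := by
      rw [← mul_pow]
      norm_num
    have hunion : ∏ j ∈ S.erase i, (z i - z j)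
        = (∏ j ∈ Finset.Icc 1 (i-1), (z i - z j)) * ∏ j ∈ Finset.Icc (i+1) (n+1), (z i - z j) := by
      rw [hsplit, Finset.prod_union hdisj2]
    rw [hunion, hB,
      show (-1:ℝ)^(n+1-i) * ((∏ j ∈ Finset.Icc 1 (i-1), (z i - z j)) *
        ((-1:ℝ)^(n+1-i) * ∏ j ∈ Finset.Icc (i+1) (n+1), (z j - z i)))
      = (((-1:ℝ)^(n+1-i)) * ((-1:ℝ)^(n+1-i))) * ((∏ j ∈ Finset.Icc 1 (i-1), (z i - z j)) *
        ∏ j ∈ Finset.Icc (i+1) (n+1), (z j - z i)) from by ring, hsq, one_mul]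
    exact mul_pos hA hC
  -- sign of derivative of p at roots
  have hDsign : ∀ i ∈ S, 0 < (-1:ℝ)^i * ((derivative p).eval (z i)) := by
    intro i hi
    have hiIcc := Finset.mem_Icc.mp (hSdef ▸ hi)
    rw [hderiv i hi, hcdef]
    have hpowid : (-1:ℝ)^i * (-1:ℝ)^(n+1) = (-1:ℝ)^(n+1-i) := by
      rw [← pow_add, show i + (n+1) = (n+1-i) + 2*i by omega, pow_add, pow_mul, neg_one_sq,
        one_pow, mul_one]
    rw [show (-1:ℝ)^i * ((-1:ℝ)^(n+1) / (n+1).factorial * ∏ j ∈ S.erase i, (z i - z j))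
      = ((-1:ℝ)^i * (-1:ℝ)^(n+1)) * (∏ j ∈ S.erase i, (z i - z j)) * (1/((n+1).factorial:ℝ))
      from by ring, hpowid]
    apply mul_pos (hprodsign i hi)
    positivity
  -- the auxiliary function F
  set F : Polynomial ℝ := (C ((n:ℝ)+1) - X) * q with hFdef
  have hFeval : ∀ t : ℝ, F.eval t = (((n:ℝ)+1) - t) * q.eval t := by
    intro t
    rw [hFdef]
    simp [eval_mul, eval_sub, eval_C, eval_X]
  have hq0pos : 0 < q.eval 0 := eval_zero_laguerre α n hα
  have hF0 : 0 < F.eval 0 := by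
    rw [hFeval]
    have : (0:ℝ) < (n:ℝ)+1 := by positivity
    nlinarith
  have hFz : ∀ i ∈ S, 0 < (-1:ℝ)^i * F.eval (z i) := by
    intro i hi
    have h1 : K * ((-1:ℝ)^i * F.eval (z i))
        = z i * ((((n:ℝ)+1) - z i)^2 * ((-1:ℝ)^i * ((derivative p).eval (z i)))) := by
      rw [hFeval]
      linear_combination ((-1:ℝ)^i * (((n:ℝ)+1) - z i)) * hqz i hi
    have h2 : 0 < z i := hzpos i (hSdef ▸ hi)
    have h3 : (((n:ℝ)+1) - z i) ≠ 0 := sub_ne_zero.mpr (Ne.symm (hzneq i hi))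
    have h3' : 0 < (((n:ℝ)+1) - z i)^2 := pow_two_pos_of_ne_zero h3
    have h4 := hDsign i hi
    have h5 : 0 < K * ((-1:ℝ)^i * F.eval (z i)) := by
      rw [h1]
      exact mul_pos h2 (mul_pos h3' h4)
    by_contra hcon
    push_neg at hcon
    nlinarith
  -- witnesses in each interval
  have hwitness : ∀ i ∈ S, ∃ t, t ∈ Set.Ioo (z (i-1)) (z i)
      ∧ (t = (n:ℝ)+1 ∨ q.eval t = 0) := by
    intro i hi
    have hiIcc := Finset.mem_Icc.mp (hSdef ▸ hi)
    obtain ⟨k, rfl⟩ : ∃ k, i = k+1 := ⟨i-1, by omega⟩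
    have hk1 : k+1-1 = k := by omega
    rw [hk1]
    have hab : z k < z (k+1) := by
      rcases Nat.eq_zero_or_pos k with rfl | hkpos
      · rw [hz0]
        exact hzpos (0+1) hi
      · exact hzmono k (by rw [hSdef]; exact Finset.mem_Icc.mpr (by omega)) (k+1) hi (by omega)
    have hcont : ContinuousOn (fun t : ℝ => F.eval t) (Set.Icc (z k) (z (k+1))) :=
      F.continuous.continuousOn
    have hsk : 0 < (-1:ℝ)^k * F.eval (z k) := by
      rcases Nat.eq_zero_or_pos k with rfl | hkpos
      · rw [hz0]
        simpa using hF0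
      · exact hFz k (by rw [hSdef]; exact Finset.mem_Icc.mpr (by omega))
    have hsk1 : 0 < (-1:ℝ)^(k+1) * F.eval (z (k+1)) := hFz (k+1) hi
    have hgoal : ∃ t ∈ Set.Ioo (z k) (z (k+1)), F.eval t = 0 := by
      rcases Nat.even_or_odd k with he | ho
      · have e1 : (-1:ℝ)^k = 1 := he.neg_one_pow
        have e2 : (-1:ℝ)^(k+1) = -1 := by rw [pow_succ, e1]; ring
        rw [e1, one_mul] at hsk
        rw [e2] at hsk1
        have : (0:ℝ) ∈ Set.Ioo (F.eval (z (k+1))) (F.eval (z k)) := ⟨by linarith, hsk⟩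
        obtain ⟨t, ht, hFt⟩ := intermediate_value_Ioo' hab.le hcont this
        exact ⟨t, ht, hFt⟩
      · have e1 : (-1:ℝ)^k = -1 := ho.neg_one_pow
        have e2 : (-1:ℝ)^(k+1) = 1 := by rw [pow_succ, e1]; ring
        rw [e1] at hsk
        rw [e2, one_mul] at hsk1
        have : (0:ℝ) ∈ Set.Ioo (F.eval (z k)) (F.eval (z (k+1))) := ⟨by linarith, hsk1⟩
        obtain ⟨t, ht, hFt⟩ := intermediate_value_Ioo hab.le hcont this
        exact ⟨t, ht, hFt⟩
    obtain ⟨t, ht, hFt⟩ := hgoal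
    refine ⟨t, ht, ?_⟩
    rw [hFeval] at hFt
    rcases mul_eq_zero.mp hFt with h | h
    · left; linarith [sub_eq_zero.mp h]
    · right; exact h
  choose! w hw1 hw2 using hwitness
  -- intervals are pairwise disjoint
  have horder : ∀ i ∈ S, ∀ j ∈ S, i < j → ∀ t : ℝ,
      t ∈ Set.Ioo (z (i-1)) (z i) → t ∈ Set.Ioo (z (j-1)) (z j) → False := by
    intro i hi j hj hij t ht1 ht2
    have hiIcc := Finset.mem_Icc.mp (hSdef ▸ hi)
    have hjIcc := Finset.mem_Icc.mp (hSdef ▸ hj)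
    have hle : z i ≤ z (j-1) := by
      rcases Nat.lt_or_ge i (j-1) with h | h
      · exact (hzmono i hi (j-1) (by rw [hSdef]; exact Finset.mem_Icc.mpr (by omega)) h).le
      · have : i = j - 1 := by omega
        rw [this]
    have h1 := ht1.2
    have h2 := ht2.1
    linarith
  have hdisj : ∀ i ∈ S, ∀ j ∈ S, ∀ t : ℝ,
      t ∈ Set.Ioo (z (i-1)) (z i) → t ∈ Set.Ioo (z (j-1)) (z j) → i = j := by
    intro i hi j hj t ht1 ht2
    rcases Nat.lt_trichotomy i j with h | h | h
    · exact absurd (horder i hi j hj h t ht1 ht2) (not_false)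
    · exact h
    · exact absurd (horder j hj i hi h t ht2 ht1) (not_false)
  -- counting
  have hqne : q ≠ 0 := laguerre_ne_zero α n
  set R : Finset ℝ := q.roots.toFinset with hRdef
  have hRcard : R.card ≤ n := by
    calc R.card ≤ Multiset.card q.roots := q.roots.toFinset_card_le
      _ ≤ q.natDegree := q.card_roots'
      _ = n := natDegree_laguerre α n
  set U : Finset ℝ := insert ((n:ℝ)+1) R with hUdef
  have hwin : ∀ i ∈ S, w i ∈ U := by
    intro i hi
    rcases hw2 i hi with h | h
    · rw [hUdef, h]; exact Finset.mem_insert_self _ _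
    · rw [hUdef]
      exact Finset.mem_insert_of_mem (Multiset.mem_toFinset.mpr (mem_roots'.mpr ⟨hqne, h⟩))
  have hwinj : Set.InjOn w S := by
    intro i hi j hj hij
    exact hdisj i hi j hj (w i) (hw1 i hi) (hij ▸ hw1 j hj)
  have hScard : S.card = n+1 := by rw [hSdef, Nat.card_Icc]; omega
  have himgcard : (S.image w).card = n+1 := by
    rw [Finset.card_image_of_injOn hwinj, hScard]
  have hUcard : U.card ≤ n+1 := by
    calc U.card ≤ R.card + 1 := Finset.card_insert_le _ _
      _ ≤ n+1 := by omega
  have heqUI : S.image w = U := by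
    apply Finset.eq_of_subset_of_card_le
    · intro a ha
      obtain ⟨i, hi, rfl⟩ := Finset.mem_image.mp ha
      exact hwin i hi
    · omega
  have hn1R : ((n:ℝ)+1) ∉ R := by
    intro hmem
    have hUR : U = R := by rw [hUdef]; exact Finset.insert_eq_self.mpr hmem
    rw [hUR] at heqUI
    have := himgcard
    rw [heqUI] at this
    omega
  have hrootw : ∀ i ∈ S, ∀ t : ℝ, t ∈ Set.Ioo (z (i-1)) (z i) → q.eval t = 0 → t = w i := by
    intro i hi t ht hqt
    have htU : t ∈ U := by
      rw [hUdef]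
      exact Finset.mem_insert_of_mem (Multiset.mem_toFinset.mpr (mem_roots'.mpr ⟨hqne, hqt⟩))
    rw [← heqUI] at htU
    obtain ⟨j, hj, hwj⟩ := Finset.mem_image.mp htU
    have : j = i := hdisj j hj i hi t (hwj ▸ hw1 j hj) ht
    rw [← hwj, this]
  have hn1w : ∃ i0 ∈ S, w i0 = (n:ℝ)+1 := by
    have : ((n:ℝ)+1) ∈ U := by rw [hUdef]; exact Finset.mem_insert_self _ _
    rw [← heqUI] at this
    obtain ⟨i0, hi0, hwi0⟩ := Finset.mem_image.mp this
    exact ⟨i0, hi0, hwi0⟩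
  -- conclusion
  intro i hi
  rcases hw2 i hi with hcase | hcase
  · left
    constructor
    · rw [← hcase]
      exact hw1 i hi
    · rintro ⟨t, ⟨ht, hqt⟩, -⟩
      have h := hrootw i hi t ht hqt
      rw [h, hcase] at hqt
      exact hn1R (Multiset.mem_toFinset.mpr (mem_roots'.mpr ⟨hqne, hqt⟩))
  · right
    have hwiR : w i ∈ R := Multiset.mem_toFinset.mpr (mem_roots'.mpr ⟨hqne, hcase⟩)
    constructor
    · exact ⟨w i, ⟨hw1 i hi, hcase⟩, fun y hy => hrootw i hi y hy.1 hy.2⟩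
    · intro hleft
      obtain ⟨i0, hi0, hwi0⟩ := hn1w
      have hii : i0 = i := hdisj i0 hi0 i hi ((n:ℝ)+1) (hwi0 ▸ hw1 i0 hi0) hleft
      rw [hii] at hwi0
      rw [hwi0] at hwiR
      exact hn1R hwiR
end

section
/- For every real α and every n ∈ ℕ, the polynomial identity x² · L_{n+1}^{(α+2)}(x) = (x² − (2n+2)x − (n+1)(α+1)) · L_{n+1}^{(α)}(x) + (x + α + 1)(α + n + 1) · L_n^{(α)}(x) holds in ℝ[x]. -/
/-!
The coefficient of `x^k` in `L_n^{(α)}` is `(-1)^k / k! · binom(n + α, n - k)`, so Pascal's rule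
gives `L_{n+1}^{(α)} = L_{n+1}^{(α+1)} - L_n^{(α+1)}` and the absorption identity gives
`x L_n^{(α+1)} = (n + α + 1) L_n^{(α)} - (n + 1) L_{n+1}^{(α)}`. Together they yield
`x L_{n+1}^{(α+1)} = (x - n - 1) L_{n+1}^{(α)} + (n + α + 1) L_n^{(α)}`, which raises the
parameter without raising the degree. Applying it at `α + 1` and then at `α`, and removing the
leftover `x L_n^{(α+1)}` with the absorption identity, gives the recurrence.
-/

open Polynomial

open Finset Nat

lemma prod_Icc_add_one_add_one {M : Type*} [CommMonoid M] (f : ℕ → M) (a b : ℕ) :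
    ∏ j ∈ Icc (a + 1) (b + 1), f j = ∏ j ∈ Icc a b, f (j + 1) := by
  rw [← map_add_right_Icc, prod_map]
  rfl

lemma prod_Icc_eq_mul_prod_Icc_add_one {M : Type*} [CommMonoid M] (f : ℕ → M) {a b : ℕ}
    (h : a ≤ b) : ∏ j ∈ Icc a b, f j = f a * ∏ j ∈ Icc (a + 1) b, f j := by
  rw [Icc_add_one_left_eq_Ioc, mul_prod_Ioc_eq_prod_Icc h]

lemma prod_Icc_add_one_add_natCast (α : ℝ) (a b : ℕ) :
    ∏ j ∈ Icc a b, (α + 1 + j) = ∏ j ∈ Icc (a + 1) (b + 1), (α + j) := by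
  rw [prod_Icc_add_one_add_one]
  push_cast
  ring_nf

noncomputable def laguerreCoeff (α : ℝ) (n k : ℕ) : ℝ :=
  (-1) ^ k * (∏ j ∈ Icc (k + 1) n, (α + j)) / ((n - k)! * k !)

lemma coeff_laguerre_s5 (α : ℝ) (n k : ℕ) :
    (laguerre α n).coeff k = if k ≤ n then laguerreCoeff α n k else 0 := by
  simp [laguerre, laguerreCoeff]

lemma laguerreCoeff_self (α : ℝ) (n : ℕ) : laguerreCoeff α n n = (-1) ^ n / n ! := by
  simp [laguerreCoeff]

lemma laguerreCoeff_param_add_one_sub (α : ℝ) {n k : ℕ} (hk : k ≤ n) :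
    laguerreCoeff (α + 1) (n + 1) k - laguerreCoeff (α + 1) n k = laguerreCoeff α (n + 1) k := by
  obtain ⟨d, rfl⟩ := exists_add_of_le hk
  simp only [laguerreCoeff, show k + d + 1 - k = d + 1 by omega, Nat.add_sub_cancel_left,
    prod_Icc_add_one_add_natCast]
  rw [prod_Icc_succ_top (by omega),
    prod_Icc_eq_mul_prod_Icc_add_one _ (by omega : k + 1 ≤ k + d + 1), factorial_succ]
  push_cast
  field_simp
  ring

lemma laguerreCoeff_param_add_one (α : ℝ) {n k : ℕ} (hk : k < n) :
    laguerreCoeff (α + 1) n k =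
      (n + α + 1) * laguerreCoeff α n (k + 1) - (n + 1) * laguerreCoeff α (n + 1) (k + 1) := by
  obtain ⟨d, rfl⟩ := exists_add_of_le (Nat.succ_le_of_lt hk)
  simp only [laguerreCoeff, show k + 1 + d - k = d + 1 by omega,
    show k + 1 + d + 1 - (k + 1) = d + 1 by omega, Nat.add_sub_cancel_left,
    prod_Icc_add_one_add_natCast]
  rw [prod_Icc_succ_top (by omega : k + 1 + 1 ≤ k + 1 + d + 1), factorial_succ, factorial_succ]
  push_cast
  field_simp
  ring

lemma succ_mul_laguerreCoeff_succ_zero (α : ℝ) (n : ℕ) :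
    (n + 1) * laguerreCoeff α (n + 1) 0 = (n + α + 1) * laguerreCoeff α n 0 := by
  simp only [laguerreCoeff, Nat.sub_zero]
  rw [prod_Icc_succ_top (by omega), factorial_succ]
  push_cast
  field_simp
  ring

lemma laguerre_param_add_one_sub (α : ℝ) (n : ℕ) :
    laguerre (α + 1) (n + 1) - laguerre (α + 1) n = laguerre α (n + 1) := by
  ext k
  simp only [coeff_sub, coeff_laguerre_s5]
  obtain hk | rfl | hk := lt_trichotomy k (n + 1)
  · have hkn : k ≤ n := Nat.le_of_lt_succ hk
    simp only [hkn, hk.le, if_true, laguerreCoeff_param_add_one_sub α hkn]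
  · simp [laguerreCoeff_self]
  · simp [show ¬k ≤ n + 1 by omega, show ¬k ≤ n by omega]

lemma X_mul_laguerre_param_add_one (α : ℝ) (n : ℕ) :
    X * laguerre (α + 1) n =
      C (n + α + 1) * laguerre α n - C ((n : ℝ) + 1) * laguerre α (n + 1) := by
  ext k
  rcases k with _ | k
  · simp only [coeff_X_mul_zero, coeff_sub, coeff_C_mul, coeff_laguerre_s5, zero_le, if_true,
      succ_mul_laguerreCoeff_succ_zero, sub_self]
  simp only [coeff_X_mul, coeff_sub, coeff_C_mul, coeff_laguerre_s5]
  obtain hk | rfl | hk := lt_trichotomy k n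
  · simp only [hk.le, hk, hk.trans n.lt_succ_self, if_true, Nat.succ_le_of_lt,
      laguerreCoeff_param_add_one α hk]
  · rw [if_pos le_rfl, if_neg (Nat.not_succ_le_self k), if_pos le_rfl, laguerreCoeff_self,
      laguerreCoeff_self, pow_succ, factorial_succ]
    push_cast
    field_simp
    ring
  · simp [show ¬k ≤ n by omega, show ¬k + 1 ≤ n by omega, show ¬k + 1 ≤ n + 1 by omega]

lemma X_mul_laguerre_succ_param_add_one (α : ℝ) (n : ℕ) :
    X * laguerre (α + 1) (n + 1) =
      (X - C ((n : ℝ) + 1)) * laguerre α (n + 1) + C (n + α + 1) * laguerre α n := by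
  linear_combination X_mul_laguerre_param_add_one α n + X * laguerre_param_add_one_sub α n

theorem laguerre_mixed_recurrence_deg_succ_param_two (α : ℝ) (n : ℕ) :
    Polynomial.X ^ 2 * laguerre (α + 2) (n + 1) =
      (Polynomial.X ^ 2 - Polynomial.C (2 * (n : ℝ) + 2) * Polynomial.X -
          Polynomial.C (((n : ℝ) + 1) * (α + 1))) * laguerre α (n + 1) +
        (Polynomial.X + Polynomial.C (α + 1)) * Polynomial.C (α + (n : ℝ) + 1) *
          laguerre α n := by
  have step₂ := X_mul_laguerre_succ_param_add_one (α + 1) n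
  rw [show α + 1 + 1 = α + 2 by ring] at step₂
  linear_combination (norm := (simp only [map_add, map_mul, map_one, map_natCast, map_ofNat]; ring))
    X * step₂ + (X - C ((n : ℝ) + 1)) * X_mul_laguerre_succ_param_add_one α n +
      C ((n : ℝ) + α + 2) * X_mul_laguerre_param_add_one α n
end

section
/- For every real α and every n ∈ ℕ, the polynomial identity x²(x − n − 1) · L_{n+1}^{(α+3)}(x) = a(x) · L_{n+1}^{(α+1)}(x) + b(x) · L_n^{(α)}(x) holds in ℝ[x], where a(x) = (x − n − 1)[(x + α + 2)(x + α + 1) − x(α + n + 3)] − x(x + α + 2)(α + n + 2) and b(x) = (α + n + 1)(α + n + 2)(x + α + 2). -/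
open Polynomial

theorem Ring.succ_mul_choose_succ_succ {R : Type*} [NonAssocRing R] [Pow R ℕ] [NatPowAssoc R]
    [BinomialRing R] (r : R) (k : ℕ) :
    ((k : R) + 1) * Ring.choose (r + 1) (k + 1) = (r + 1) * Ring.choose r k := by
  simpa [Ring.choose_one_right, nsmul_eq_mul] using Ring.choose_add_smul_choose r k 1

theorem Polynomial.coeff_X_mul_derivative {R : Type*} [Semiring R] (p : R[X]) (k : ℕ) :
    (X * derivative p).coeff k = k * p.coeff k := by
  cases k with
  | zero => simp
  | succ k => rw [coeff_X_mul, coeff_derivative, ← Nat.cast_succ, Nat.cast_comm]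

theorem prod_Icc_add_div_factorial (α : ℝ) (k d : ℕ) :
    (∏ j ∈ Finset.Icc (k + 1) (k + d), (α + j)) / d.factorial =
      Ring.choose (α + (k + d : ℕ)) d := by
  induction d with
  | zero => simp
  | succ d ih =>
    have hd : (d : ℝ) + 1 ≠ 0 := by positivity
    rw [← add_assoc, Finset.prod_Icc_succ_top (by omega), Nat.factorial_succ, Nat.cast_mul,
      Nat.cast_add_one, Nat.cast_add_one, ← add_assoc]
    apply mul_left_cancel₀ hd
    rw [Ring.succ_mul_choose_succ_succ, ← ih]
    field_simp

theorem laguerre_coeff (α : ℝ) (n k : ℕ) :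
    (laguerre α n).coeff k =
      if k ≤ n then (-1) ^ k / k.factorial * Ring.choose (α + n) (n - k) else 0 := by
  simp only [laguerre, finsetSum_coeff, coeff_C_mul_X_pow, Finset.sum_ite_eq, Finset.mem_range,
    Nat.lt_succ_iff]
  split_ifs with hk
  · obtain ⟨d, rfl⟩ := Nat.exists_eq_add_of_le hk
    rw [Nat.add_sub_cancel_left, ← prod_Icc_add_div_factorial]
    field_simp
  · rfl

theorem laguerre_add_one_succ (α : ℝ) (n : ℕ) :
    laguerre (α + 1) (n + 1) = laguerre α (n + 1) + laguerre (α + 1) n := by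
  ext k
  rw [coeff_add, laguerre_coeff, laguerre_coeff, laguerre_coeff]
  obtain hk | rfl | hk : k ≤ n ∨ k = n + 1 ∨ n + 1 < k := by omega
  · obtain ⟨d, rfl⟩ := Nat.exists_eq_add_of_le hk
    rw [if_pos (by omega), if_pos (by omega), if_pos hk, ← mul_add, add_comm (Ring.choose _ _),
      show k + d + 1 - k = d + 1 by omega, Nat.add_sub_cancel_left]
    push_cast
    rw [show α + 1 + (k + d + 1) = α + 1 + (k + d) + 1 by ring, Ring.choose_succ_succ]
    ring_nf
  · simp
  · simp [show ¬ k ≤ n + 1 by omega, show ¬ k ≤ n by omega]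

theorem derivative_laguerre_succ (α : ℝ) (n : ℕ) :
    derivative (laguerre α (n + 1)) = -laguerre (α + 1) n := by
  ext k
  rw [coeff_derivative, coeff_neg, laguerre_coeff, laguerre_coeff, Nat.add_sub_add_right]
  simp only [add_le_add_iff_right]
  split_ifs
  · rw [Nat.factorial_succ]
    push_cast
    rw [add_right_comm α, ← add_assoc α]
    field_simp
    ring
  · simp

theorem succ_mul_laguerre_sub_X_mul_derivative (α : ℝ) (n : ℕ) :
    C ((n : ℝ) + 1) * laguerre α (n + 1) - X * derivative (laguerre α (n + 1)) =
      C (α + n + 1) * laguerre α n := by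
  ext k
  rw [coeff_sub, coeff_C_mul, coeff_C_mul, coeff_X_mul_derivative, ← sub_mul, laguerre_coeff,
    laguerre_coeff]
  obtain hk | rfl | hk : k ≤ n ∨ k = n + 1 ∨ n + 1 < k := by omega
  · obtain ⟨d, rfl⟩ := Nat.exists_eq_add_of_le hk
    rw [if_pos (by omega), if_pos hk, show k + d + 1 - k = d + 1 by omega, Nat.add_sub_cancel_left]
    have h := Ring.succ_mul_choose_succ_succ (α + (k + d : ℕ)) d
    push_cast at h ⊢
    rw [← add_assoc α]
    linear_combination (-1) ^ k / (k.factorial : ℝ) * h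
  · simp
  · simp [show ¬ k ≤ n + 1 by omega, show ¬ k ≤ n by omega]

theorem X_mul_laguerre_add_one_succ (α : ℝ) (n : ℕ) :
    X * laguerre (α + 1) (n + 1) =
      C (α + n + 1) * laguerre α n - (C ((n : ℝ) + 1) - X) * laguerre α (n + 1) := by
  linear_combination X * laguerre_add_one_succ α n + X * derivative_laguerre_succ α n
    + succ_mul_laguerre_sub_X_mul_derivative α n

theorem laguerre_mixed_recurrence_deg_succ_param_three (α : ℝ) (n : ℕ) :
    Polynomial.X ^ 2 * (Polynomial.X - Polynomial.C ((n : ℝ) + 1)) *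
        laguerre (α + 3) (n + 1) =
      ((Polynomial.X - Polynomial.C ((n : ℝ) + 1)) *
            ((Polynomial.X + Polynomial.C (α + 2)) * (Polynomial.X + Polynomial.C (α + 1)) -
              Polynomial.X * Polynomial.C (α + (n : ℝ) + 3)) -
          Polynomial.X * (Polynomial.X + Polynomial.C (α + 2)) *
            Polynomial.C (α + (n : ℝ) + 2)) * laguerre (α + 1) (n + 1) +
        Polynomial.C ((α + (n : ℝ) + 1) * (α + (n : ℝ) + 2)) *
          (Polynomial.X + Polynomial.C (α + 2)) * laguerre α n := by
  have hX2 := X_mul_laguerre_add_one_succ (α + 2) n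
  have hX1 := X_mul_laguerre_add_one_succ (α + 1) n
  have hX0 := X_mul_laguerre_add_one_succ α n
  have hP1 := laguerre_add_one_succ (α + 1) n
  have hP0 := laguerre_add_one_succ α n
  rw [show α + 2 + 1 = α + 3 by ring] at hX2
  rw [show α + 1 + 1 = α + 2 by ring] at hX1 hP1
  simp only [map_add, map_mul, map_one, map_ofNat] at hX2 hX1 hX0 hP1 hP0 ⊢
  linear_combination (norm := ring1)
    (X * (X - (C (n : ℝ) + 1))) * hX2
    + ((X - (C (n : ℝ) + 1)) ^ 2 + (C α + C (n : ℝ) + 3) * (X - (C (n : ℝ) + 1))) * hX1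
    - (C α + C (n : ℝ) + 3) * (X - (C (n : ℝ) + 1)) * X * hP1
    - (C α + C (n : ℝ) + 2) * (X + C α + 2) * (X - (C (n : ℝ) + 1)) * hP0
    + (C α + C (n : ℝ) + 2) * (X + C α + 2) * hX0
end

section
/- For every real α and every n ∈ ℕ, the polynomial identity x² · L_n^{(α+4)}(x) = d(x) · L_n^{(α+2)}(x) − e(x) · L_n^{(α+1)}(x) holds in ℝ[x], where d(x) = (x + α + 3)(x + α + 2) − x(α + n + 3) and e(x) = (x + α + 3)(α + n + 2). -/
/-!
The coefficient of `x^k` in `L_n^{(β)}` is `(-1)^k (β+k+1)^{(n-k)} / ((n-k)! k!)`, with a rising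
factorial. Comparing coefficients, the contiguous relation
`x L_n^{(β+2)} = (x + β + 1) L_n^{(β+1)} - (β + n + 1) L_n^{(β)}`
reduces to the two ways of peeling a factor off a rising factorial,
`(a)^{(m+1)} = a (a+1)^{(m)} = (a)^{(m)} (a + m)`.
Applying the relation at `β = α + 2` and `β = α + 1` and eliminating `L_n^{(α+3)}` gives the theorem.
-/

open Polynomial

open Nat

section Pochhammer

variable {S : Type*} [CommSemiring S]

theorem prod_Icc_add_eq_ascPochhammer_eval (β : S) (k m : ℕ) :
    ∏ j ∈ Finset.Icc (k + 1) (k + m), (β + j) = (ascPochhammer S m).eval (β + k + 1) := by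
  induction m with
  | zero => simp
  | succ m ih =>
    rw [← add_assoc, Finset.prod_Icc_succ_top (by omega), ih, ascPochhammer_succ_eval]
    push_cast
    ring

theorem ascPochhammer_succ_eval_left (n : ℕ) (a : S) :
    (ascPochhammer S (n + 1)).eval a = a * (ascPochhammer S n).eval (a + 1) := by
  simp [ascPochhammer_succ_left, eval_comp]

theorem ascPochhammer_eval_add_one_mul (n : ℕ) (a : S) :
    a * (ascPochhammer S n).eval (a + 1) = (ascPochhammer S n).eval a * (a + n) := by
  rw [← ascPochhammer_succ_eval_left, ascPochhammer_succ_eval]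

end Pochhammer

theorem laguerre_coeff_of_le (α : ℝ) {n k : ℕ} (h : k ≤ n) :
    (laguerre α n).coeff k =
      (-1) ^ k * (ascPochhammer ℝ (n - k)).eval (α + k + 1) / ((n - k)! * k !) := by
  obtain ⟨m, rfl⟩ := Nat.exists_eq_add_of_le h
  simp [laguerre, coeff_C_mul, coeff_X_pow, Nat.lt_succ_of_le h,
    prod_Icc_add_eq_ascPochhammer_eval]

theorem laguerre_coeff_of_lt (α : ℝ) {n k : ℕ} (h : n < k) : (laguerre α n).coeff k = 0 := by
  simp [laguerre, coeff_C_mul, coeff_X_pow, Nat.not_lt.2 h]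

theorem X_mul_laguerre_add_two (β : ℝ) (n : ℕ) :
    X * laguerre (β + 2) n =
      (X + C (β + 1)) * laguerre (β + 1) n - C (β + n + 1) * laguerre β n := by
  ext k
  rcases k with _ | k
  · simp only [coeff_sub, add_mul, coeff_add, mul_coeff_zero, coeff_X_zero, zero_mul, zero_add,
      coeff_C_zero, laguerre_coeff_of_le _ (Nat.zero_le n), Nat.sub_zero, cast_zero, add_zero,
      pow_zero, factorial_zero, cast_one, mul_one, one_mul]
    linear_combination (-1 / (n ! : ℝ)) * ascPochhammer_eval_add_one_mul n (β + 1)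
  simp only [coeff_sub, add_mul, coeff_add, coeff_C_mul, coeff_X_mul]
  rcases lt_trichotomy k n with hk | rfl | hk
  · obtain ⟨m, rfl⟩ := Nat.exists_eq_add_of_lt hk
    simp only [laguerre_coeff_of_le _ hk.le, laguerre_coeff_of_le _ hk,
      show k + m + 1 - k = m + 1 by omega, show k + m + 1 - (k + 1) = m by omega]
    rw [ascPochhammer_succ_eval, ascPochhammer_succ_eval_left, factorial_succ, factorial_succ,
      pow_succ]
    have key := ascPochhammer_eval_add_one_mul m (β + k + 2)
    push_cast
    field_simp
    -- identifies the several spellings of the evaluation points `β + k + 2` and `β + k + 3`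
    ring_nf at key ⊢
    linear_combination ((m : ℝ) + 1) * key
  · simp [laguerre_coeff_of_le, laguerre_coeff_of_lt]
  · simp [laguerre_coeff_of_lt, hk, hk.trans (Nat.lt_succ_self k)]

theorem laguerre_mixed_recurrence_equal_deg_param_four_step (α : ℝ) (n : ℕ) :
    Polynomial.X ^ 2 * laguerre (α + 4) n =
      ((Polynomial.X + Polynomial.C (α + 3)) * (Polynomial.X + Polynomial.C (α + 2)) -
          Polynomial.X * Polynomial.C (α + (n : ℝ) + 3)) * laguerre (α + 2) n -
        (Polynomial.X + Polynomial.C (α + 3)) * Polynomial.C (α + (n : ℝ) + 2) *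
          laguerre (α + 1) n := by
  have h₁ := X_mul_laguerre_add_two (α + 2) n
  have h₂ := X_mul_laguerre_add_two (α + 1) n
  rw [show α + 2 + 2 = α + 4 by ring, show α + 2 + 1 = α + 3 by ring,
    show α + 2 + (n : ℝ) + 1 = α + n + 3 by ring] at h₁
  rw [show α + 1 + 2 = α + 3 by ring, show α + 1 + 1 = α + 2 by ring,
    show α + 1 + (n : ℝ) + 1 = α + n + 2 by ring] at h₂
  linear_combination X * h₁ + (X + C (α + 3)) * h₂
end
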